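/- Let u⋆ ∈ C⁴([0,1]²) satisfy ∂₁₁u⋆ + (5/4)∂₂₂u⋆ = −x₂·∂₁u⋆·∂₁₁u⋆ on [0,1]², with Neumann conditions ∂₂u⋆(p, 0) = 0 for all p and ∂₁u⋆(0, x₂) = 0 for all x₂, along with ∂₁u⋆(0,0) = 0. Then ∂₁₁u⋆(0,0) = 0. -/

import Mathlib

noncomputable def pt (a b : ℝ) : EuclideanSpace ℝ (Fin 2) :=
  (WithLp.equiv 2 (Fin 2 → ℝ)).symm ![a, b]

/-- mixed second partial derivative `∂ᵥ∂_w u` -/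
noncomputable def D2 (u : EuclideanSpace ℝ (Fin 2) → ℝ)
    (x w w' : EuclideanSpace ℝ (Fin 2)) : ℝ :=
  fderiv ℝ (fun y => fderiv ℝ u y w') x w

lemma pt_eq (a b : ℝ) : pt a b = a • pt 1 0 + b • pt 0 1 := by
  simp only [pt]; ext i; fin_cases i <;> simp [pt]

/-- derivative of F along the vertical line x₁ = p -/
lemma lineD2 {F : EuclideanSpace ℝ (Fin 2) → ℝ} (hF : Differentiable ℝ F) (p t₀ : ℝ) :
    HasDerivAt (fun t => F (pt p t)) (fderiv ℝ F (pt p t₀) (pt 0 1)) t₀ := by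
  have hline : HasDerivAt (fun t : ℝ => pt p t) (pt 0 1) t₀ := by
    have h : (fun t : ℝ => pt p t) = fun t : ℝ => t • pt 0 1 + p • pt 1 0 := by
      funext t; rw [pt_eq]; abel
    rw [h]
    simpa using ((hasDerivAt_id t₀).smul_const (pt 0 1)).add_const (p • pt 1 0)
  exact (hF (pt p t₀)).hasFDerivAt.comp_hasDerivAt t₀ hline

/-- derivative of F along the horizontal line x₂ = c -/
lemma lineD1 {F : EuclideanSpace ℝ (Fin 2) → ℝ} (hF : Differentiable ℝ F) (c p₀ : ℝ) :
    HasDerivAt (fun s => F (pt s c)) (fderiv ℝ F (pt p₀ c) (pt 1 0)) p₀ := by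
  have hline : HasDerivAt (fun s : ℝ => pt s c) (pt 1 0) p₀ := by
    have h : (fun s : ℝ => pt s c) = fun s : ℝ => s • pt 1 0 + c • pt 0 1 := by
      funext s; rw [pt_eq]
    rw [h]
    simpa using ((hasDerivAt_id p₀).smul_const (pt 1 0)).add_const (c • pt 0 1)
  exact (hF (pt p₀ c)).hasFDerivAt.comp_hasDerivAt p₀ hline

lemma Dv_contDiff {F : EuclideanSpace ℝ (Fin 2) → ℝ} {n : ℕ} (hF : ContDiff ℝ (n+1 : ℕ) F)
    (v : EuclideanSpace ℝ (Fin 2)) : ContDiff ℝ n (fun x => fderiv ℝ F x v) :=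
  (hF.fderiv_right (by norm_cast)).clm_apply contDiff_const

lemma zero_deriv_Icc {g : ℝ → ℝ} (hg : Differentiable ℝ g)
    (h : ∀ t ∈ Set.Icc (0:ℝ) 1, g t = 0) : ∀ t ∈ Set.Icc (0:ℝ) 1, deriv g t = 0 := by
  intro t ht
  have hu : UniqueDiffWithinAt ℝ (Set.Icc (0:ℝ) 1) t := (uniqueDiffOn_Icc one_pos) t ht
  rw [← (hg t).derivWithin hu, derivWithin_congr h (h t ht)]
  simp

lemma swap2 {f : EuclideanSpace ℝ (Fin 2) → ℝ} (hf : ContDiff ℝ 2 f)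
    (x v w : EuclideanSpace ℝ (Fin 2)) :
    fderiv ℝ (fun y => fderiv ℝ f y v) x w = fderiv ℝ (fun y => fderiv ℝ f y w) x v := by
  have hsym : IsSymmSndFDerivAt ℝ f x := hf.contDiffAt.isSymmSndFDerivAt (by simp)
  have hd : DifferentiableAt ℝ (fderiv ℝ f) x :=
    ((hf.fderiv_right (m := 1) (by norm_num)).differentiable (by norm_num)).differentiableAt
  have e1 : fderiv ℝ (fun y => fderiv ℝ f y v) x = (fderiv ℝ (fderiv ℝ f) x).flip v := by
    have := fderiv_clm_apply (c := fderiv ℝ f) (u := fun _ => v) hd (differentiableAt_const v)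
    simpa using this
  have e2 : fderiv ℝ (fun y => fderiv ℝ f y w) x = (fderiv ℝ (fderiv ℝ f) x).flip w := by
    have := fderiv_clm_apply (c := fderiv ℝ f) (u := fun _ => w) hd (differentiableAt_const w)
    simpa using this
  rw [e1, e2]
  exact hsym w v

lemma key (u1 u2 : EuclideanSpace ℝ (Fin 2) → ℝ)
    (h1 : ContDiff ℝ 3 u1) (h2 : ContDiff ℝ 3 u2)
    (hsym : ∀ x, fderiv ℝ u1 x (pt 0 1) = fderiv ℝ u2 x (pt 1 0))
    (hpde : ∀ p ∈ Set.Icc (0:ℝ) 1, ∀ t ∈ Set.Icc (0:ℝ) 1,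
      fderiv ℝ u1 (pt p t) (pt 1 0) + 5 / 4 * fderiv ℝ u2 (pt p t) (pt 0 1) =
        -(t * u1 (pt p t) * fderiv ℝ u1 (pt p t) (pt 1 0)))
    (hNb : ∀ p ∈ Set.Icc (0:ℝ) 1, u2 (pt p 0) = 0)
    (hNl : ∀ t ∈ Set.Icc (0:ℝ) 1, u1 (pt 0 t) = 0)
    (h0 : u1 (pt 0 0) = 0) :
    fderiv ℝ u1 (pt 0 0) (pt 1 0) = 0 := by
  have h1' : ContDiff ℝ 2 u1 := h1.of_le (by norm_num)
  have h2' : ContDiff ℝ 2 u2 := h2.of_le (by norm_num)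
  have hd1 : Differentiable ℝ u1 := h1.differentiable (by norm_num)
  have hd2 : Differentiable ℝ u2 := h2.differentiable (by norm_num)
  have h11 : ContDiff ℝ 2 (fun x => fderiv ℝ u1 x (pt 1 0)) :=
    Dv_contDiff (n := 2) (by exact_mod_cast h1) _
  have h12 : ContDiff ℝ 2 (fun x => fderiv ℝ u1 x (pt 0 1)) :=
    Dv_contDiff (n := 2) (by exact_mod_cast h1) _
  have h21 : ContDiff ℝ 2 (fun x => fderiv ℝ u2 x (pt 1 0)) :=
    Dv_contDiff (n := 2) (by exact_mod_cast h2) _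
  have h22 : ContDiff ℝ 2 (fun x => fderiv ℝ u2 x (pt 0 1)) :=
    Dv_contDiff (n := 2) (by exact_mod_cast h2) _
  have hd11 : Differentiable ℝ (fun x => fderiv ℝ u1 x (pt 1 0)) :=
    h11.differentiable (by norm_num)
  have hd12 : Differentiable ℝ (fun x => fderiv ℝ u1 x (pt 0 1)) :=
    h12.differentiable (by norm_num)
  have hd21 : Differentiable ℝ (fun x => fderiv ℝ u2 x (pt 1 0)) :=
    h21.differentiable (by norm_num)
  have hd22 : Differentiable ℝ (fun x => fderiv ℝ u2 x (pt 0 1)) :=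
    h22.differentiable (by norm_num)
  -- second-level directional derivatives
  have ha : Differentiable ℝ (fun x => fderiv ℝ (fun y => fderiv ℝ u1 y (pt 1 0)) x (pt 0 1)) :=
    (Dv_contDiff (n := 1) (by exact_mod_cast h11) _).differentiable (by norm_num)
  have hbb : Differentiable ℝ (fun x => fderiv ℝ (fun y => fderiv ℝ u2 y (pt 0 1)) x (pt 0 1)) :=
    (Dv_contDiff (n := 1) (by exact_mod_cast h22) _).differentiable (by norm_num)
  have hww : Differentiable ℝ (fun x => fderiv ℝ (fun y => fderiv ℝ u2 y (pt 1 0)) x (pt 1 0)) :=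
    (Dv_contDiff (n := 1) (by exact_mod_cast h21) _).differentiable (by norm_num)
  have hzz : Differentiable ℝ (fun x => fderiv ℝ (fun y => fderiv ℝ u1 y (pt 0 1)) x (pt 0 1)) :=
    (Dv_contDiff (n := 1) (by exact_mod_cast h12) _).differentiable (by norm_num)
  -- Schwarz identities
  have hzw : (fun x => fderiv ℝ u1 x (pt 0 1)) = (fun x => fderiv ℝ u2 x (pt 1 0)) :=
    funext hsym
  have ha_ww : (fun x => fderiv ℝ (fun y => fderiv ℝ u1 y (pt 1 0)) x (pt 0 1))
      = (fun x => fderiv ℝ (fun y => fderiv ℝ u2 y (pt 1 0)) x (pt 1 0)) := by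
    funext x
    rw [swap2 h1' x (pt 1 0) (pt 0 1), hzw]
  have hb_zz : fderiv ℝ (fun x => fderiv ℝ (fun y => fderiv ℝ u2 y (pt 0 1)) x (pt 0 1)) (pt 0 0) (pt 1 0)
      = fderiv ℝ (fun x => fderiv ℝ (fun y => fderiv ℝ u1 y (pt 0 1)) x (pt 0 1)) (pt 0 0) (pt 0 1) := by
    have hinner : (fun y => fderiv ℝ (fun z => fderiv ℝ u2 z (pt 0 1)) y (pt 1 0))
        = (fun y => fderiv ℝ (fun z => fderiv ℝ u1 z (pt 0 1)) y (pt 0 1)) := by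
      funext y
      rw [swap2 h2' y (pt 0 1) (pt 1 0), ← hzw]
    rw [swap2 h22 (pt 0 0) (pt 0 1) (pt 1 0), hinner]
  -- bottom edge chain
  have B1 : ∀ p ∈ Set.Icc (0:ℝ) 1, fderiv ℝ u2 (pt p 0) (pt 1 0) = 0 := by
    intro p hp
    have := zero_deriv_Icc (fun q => (lineD1 hd2 0 q).differentiableAt) hNb p hp
    rwa [(lineD1 hd2 0 p).deriv] at this
  have B2 : ∀ p ∈ Set.Icc (0:ℝ) 1,
      fderiv ℝ (fun y => fderiv ℝ u2 y (pt 1 0)) (pt p 0) (pt 1 0) = 0 := by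
    intro p hp
    have := zero_deriv_Icc (fun q => (lineD1 hd21 0 q).differentiableAt) B1 p hp
    rwa [(lineD1 hd21 0 p).deriv] at this
  have B3 : fderiv ℝ (fun x => fderiv ℝ (fun y => fderiv ℝ u2 y (pt 1 0)) x (pt 1 0)) (pt 0 0) (pt 1 0) = 0 := by
    have hF : Differentiable ℝ (fun x => fderiv ℝ (fun y => fderiv ℝ u2 y (pt 1 0)) x (pt 1 0)) := hww
    have := zero_deriv_Icc (fun q => (lineD1 hF 0 q).differentiableAt) B2 0
      ⟨le_rfl, zero_le_one⟩
    rwa [(lineD1 hF 0 0).deriv] at this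
  -- left edge chain
  have L1 : ∀ t ∈ Set.Icc (0:ℝ) 1, fderiv ℝ u1 (pt 0 t) (pt 0 1) = 0 := by
    intro t ht
    have := zero_deriv_Icc (fun s => (lineD2 hd1 0 s).differentiableAt) hNl t ht
    rwa [(lineD2 hd1 0 t).deriv] at this
  have L2 : ∀ t ∈ Set.Icc (0:ℝ) 1,
      fderiv ℝ (fun y => fderiv ℝ u1 y (pt 0 1)) (pt 0 t) (pt 0 1) = 0 := by
    intro t ht
    have := zero_deriv_Icc (fun s => (lineD2 hd12 0 s).differentiableAt) L1 t ht
    rwa [(lineD2 hd12 0 t).deriv] at this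
  have L3 : fderiv ℝ (fun x => fderiv ℝ (fun y => fderiv ℝ u1 y (pt 0 1)) x (pt 0 1)) (pt 0 0) (pt 0 1) = 0 := by
    have := zero_deriv_Icc (fun s => (lineD2 hzz 0 s).differentiableAt) L2 0
      ⟨le_rfl, zero_le_one⟩
    rwa [(lineD2 hzz 0 0).deriv] at this
  -- differentiate the PDE in the x₂ direction, restrict to the bottom edge
  have E1 : ∀ p ∈ Set.Icc (0:ℝ) 1,
      fderiv ℝ (fun y => fderiv ℝ u1 y (pt 1 0)) (pt p 0) (pt 0 1)
      + 5 / 4 * fderiv ℝ (fun y => fderiv ℝ u2 y (pt 0 1)) (pt p 0) (pt 0 1)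
      + u1 (pt p 0) * fderiv ℝ u1 (pt p 0) (pt 1 0) = 0 := by
    intro p hp
    have hF : ∀ t : ℝ, HasDerivAt
        (fun t => fderiv ℝ u1 (pt p t) (pt 1 0) + 5 / 4 * fderiv ℝ u2 (pt p t) (pt 0 1)
          + t * u1 (pt p t) * fderiv ℝ u1 (pt p t) (pt 1 0))
        (fderiv ℝ (fun y => fderiv ℝ u1 y (pt 1 0)) (pt p t) (pt 0 1)
          + 5 / 4 * fderiv ℝ (fun y => fderiv ℝ u2 y (pt 0 1)) (pt p t) (pt 0 1)
          + ((1 * u1 (pt p t) + t * fderiv ℝ u1 (pt p t) (pt 0 1)) * fderiv ℝ u1 (pt p t) (pt 1 0)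
            + t * u1 (pt p t) * fderiv ℝ (fun y => fderiv ℝ u1 y (pt 1 0)) (pt p t) (pt 0 1))) t := by
      intro t
      exact ((lineD2 hd11 p t).add ((lineD2 hd22 p t).const_mul (5/4))).add
        (((hasDerivAt_id t).mul (lineD2 hd1 p t)).mul (lineD2 hd11 p t))
    have hzero : ∀ t ∈ Set.Icc (0:ℝ) 1,
        (fun t => fderiv ℝ u1 (pt p t) (pt 1 0) + 5 / 4 * fderiv ℝ u2 (pt p t) (pt 0 1)
          + t * u1 (pt p t) * fderiv ℝ u1 (pt p t) (pt 1 0)) t = 0 := by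
      intro t ht
      have := hpde p hp t ht
      simp only []
      linarith
    have hD := zero_deriv_Icc (fun t => (hF t).differentiableAt) hzero 0 ⟨le_rfl, zero_le_one⟩
    rw [(hF 0).deriv] at hD
    simp only [one_mul, zero_mul, add_zero, mul_zero] at hD
    linarith
  -- differentiate the result in the x₁ direction at the origin
  have hG : ∀ q : ℝ, HasDerivAt
      (fun q => fderiv ℝ (fun y => fderiv ℝ u1 y (pt 1 0)) (pt q 0) (pt 0 1)
        + 5 / 4 * fderiv ℝ (fun y => fderiv ℝ u2 y (pt 0 1)) (pt q 0) (pt 0 1)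
        + u1 (pt q 0) * fderiv ℝ u1 (pt q 0) (pt 1 0))
      (fderiv ℝ (fun x => fderiv ℝ (fun y => fderiv ℝ u1 y (pt 1 0)) x (pt 0 1)) (pt q 0) (pt 1 0)
        + 5 / 4 * fderiv ℝ (fun x => fderiv ℝ (fun y => fderiv ℝ u2 y (pt 0 1)) x (pt 0 1)) (pt q 0) (pt 1 0)
        + (fderiv ℝ u1 (pt q 0) (pt 1 0) * fderiv ℝ u1 (pt q 0) (pt 1 0)
          + u1 (pt q 0) * fderiv ℝ (fun y => fderiv ℝ u1 y (pt 1 0)) (pt q 0) (pt 1 0))) q := by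
    intro q
    exact ((lineD1 ha 0 q).add ((lineD1 hbb 0 q).const_mul (5/4))).add
      ((lineD1 hd1 0 q).mul (lineD1 hd11 0 q))
  have E2 := zero_deriv_Icc (fun q => (hG q).differentiableAt) E1 0 ⟨le_rfl, zero_le_one⟩
  rw [(hG 0).deriv] at E2
  rw [h0, zero_mul, add_zero] at E2
  rw [ha_ww, B3, hb_zz, L3] at E2
  have : fderiv ℝ u1 (pt 0 0) (pt 1 0) * fderiv ℝ u1 (pt 0 0) (pt 1 0) = 0 := by linarith
  exact mul_self_eq_zero.mp this

theorem stmt_16 (uStar : EuclideanSpace ℝ (Fin 2) → ℝ) (hreg : ContDiff ℝ 4 uStar)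
    (hpde : ∀ p ∈ Set.Icc (0 : ℝ) 1, ∀ x₂ ∈ Set.Icc (0 : ℝ) 1,
      D2 uStar (pt p x₂) (pt 1 0) (pt 1 0) + 5 / 4 * D2 uStar (pt p x₂) (pt 0 1) (pt 0 1) =
        -(x₂ * fderiv ℝ uStar (pt p x₂) (pt 1 0) * D2 uStar (pt p x₂) (pt 1 0) (pt 1 0)))
    (hNb : ∀ p ∈ Set.Icc (0 : ℝ) 1, fderiv ℝ uStar (pt p 0) (pt 0 1) = 0)
    (hNl : ∀ x₂ ∈ Set.Icc (0 : ℝ) 1, fderiv ℝ uStar (pt 0 x₂) (pt 1 0) = 0)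
    (h0 : fderiv ℝ uStar (pt 0 0) (pt 1 0) = 0) :
    D2 uStar (pt 0 0) (pt 1 0) (pt 1 0) = 0 := by
  simp only [D2] at hpde ⊢
  exact key (fun y => fderiv ℝ uStar y (pt 1 0)) (fun y => fderiv ℝ uStar y (pt 0 1))
    (Dv_contDiff (n := 3) (by exact_mod_cast hreg) _)
    (Dv_contDiff (n := 3) (by exact_mod_cast hreg) _)
    (fun x => swap2 (hreg.of_le (by norm_num)) x (pt 1 0) (pt 0 1))
    hpde hNb hNl h0
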